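/- For α ∈ ℝ, let 𝓕₁(α) denote ℝ² with basis e₁, e₂ and bilinear product e₁·e₁ = αe₁+αe₂, e₁·e₂ = e₂, e₂·e₁ = 0, e₂·e₂ = 0. If α ≠ α′ then there is no linear bijection f : ℝ² → ℝ² satisfying f(x·y) = f(x)·′f(y) for all x,y, where · is the product of 𝓕₁(α) and ·′ that of 𝓕₁(α′). In particular there exist infinitely many pairwise non-isomorphic left-symmetric products compatible with the bracket on aff(ℝ), hence infinitely many non-isomorphic flat left invariant affine structures on Aff(ℝ). -/

import Mathlib

/-- For `α ∈ ℝ`, `𝓕₁(α)` is `ℝ²` with product `e₁·e₁ = αe₁+αe₂`, `e₁·e₂ = e₂`,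
`e₂·e₁ = 0`, `e₂·e₂ = 0`. Each `𝓕₁(α)` is left-symmetric and compatible with the bracket
`[e₁,e₂] = e₂`, and if `α ≠ α′` then `𝓕₁(α)` and `𝓕₁(α′)` are non-isomorphic algebras;
hence there are infinitely many non-isomorphic flat left invariant affine structures
on `Aff(ℝ)`. -/
theorem stmt7 (α α' : ℝ) (h : α ≠ α')
    (mul mul' : ℝ × ℝ → ℝ × ℝ → ℝ × ℝ)
    (hmul : ∀ x y, mul x y = (α * (x.1 * y.1), α * (x.1 * y.1) + x.1 * y.2))
    (hmul' : ∀ x y, mul' x y = (α' * (x.1 * y.1), α' * (x.1 * y.1) + x.1 * y.2)) :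
    (∀ x y z, mul (mul x y) z - mul x (mul y z) = mul (mul y x) z - mul y (mul x z)) ∧
    (∀ x y, mul x y - mul y x = (0, x.1 * y.2 - x.2 * y.1)) ∧
    ¬ ∃ f : (ℝ × ℝ) ≃ₗ[ℝ] (ℝ × ℝ), ∀ x y, f (mul x y) = mul' (f x) (f y) := by
  refine ⟨?_, ?_, ?_⟩
  · intro x y z
    simp only [hmul, Prod.ext_iff, Prod.sub_def]
    constructor <;> ring
  · intro x y
    simp only [hmul, Prod.ext_iff, Prod.sub_def]
    constructor <;> ring
  · rintro ⟨f, hf⟩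
    set u := f (1, 0) with hu
    set v := f (0, 1) with hv
    -- equation at e₂, e₂
    have h1 : (0 : ℝ × ℝ) = (α' * (v.1 * v.1), α' * (v.1 * v.1) + v.1 * v.2) := by
      have := hf (0, 1) (0, 1)
      rw [hmul, hmul'] at this
      simpa [Prod.mk_zero_zero] using this
    have h1a : α' * (v.1 * v.1) = 0 := (Prod.ext_iff.mp h1).1.symm
    have h1b : α' * (v.1 * v.1) + v.1 * v.2 = 0 := (Prod.ext_iff.mp h1).2.symm
    -- equation at e₁, e₂
    have h2 : v = (α' * (u.1 * v.1), α' * (u.1 * v.1) + u.1 * v.2) := by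
      have := hf (1, 0) (0, 1)
      rw [hmul, hmul'] at this
      simpa using this
    have h2a : v.1 = α' * (u.1 * v.1) := (Prod.ext_iff.mp h2).1
    have h2b : v.2 = α' * (u.1 * v.1) + u.1 * v.2 := (Prod.ext_iff.mp h2).2
    -- equation at e₁, e₁
    have h3 : α • u + α • v = (α' * (u.1 * u.1), α' * (u.1 * u.1) + u.1 * u.2) := by
      have := hf (1, 0) (1, 0)
      rw [hmul, hmul'] at this
      norm_num at this
      rw [show ((α, α) : ℝ × ℝ) = α • (1, 0) + α • (0, 1) by
        simp [Prod.ext_iff], map_add, map_smul, map_smul] at this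
      simpa [hu, hv] using this
    have h3a : α * u.1 + α * v.1 = α' * (u.1 * u.1) := by
      have := (Prod.ext_iff.mp h3).1
      simpa [Prod.smul_def, smul_eq_mul] using this
    -- v.1 = 0
    have hv1 : v.1 = 0 := by
      by_contra hv1
      have hα' : α' = 0 := by
        have := mul_eq_zero.mp h1a
        rcases this with h' | h'
        · exact h'
        · exact absurd (mul_self_eq_zero.mp h') hv1
      rw [hα'] at h2a
      simp at h2a
      exact hv1 h2a
    -- v ≠ 0
    have hvne : v ≠ 0 := by
      intro hz
      have : ((0 : ℝ), (1 : ℝ)) = (0 : ℝ × ℝ) := f.injective (by simp [← hv, hz])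
      simp [Prod.ext_iff] at this
    have hv2 : v.2 ≠ 0 := by
      intro hz
      exact hvne (Prod.ext hv1 hz)
    -- u.1 = 1
    have hu1 : u.1 = 1 := by
      rw [hv1] at h2b
      simp at h2b
      have : v.2 * (1 - u.1) = 0 := by linarith [h2b]
      rcases mul_eq_zero.mp this with h' | h'
      · exact absurd h' hv2
      · linarith
    rw [hv1, hu1] at h3a
    simp at h3a
    exact h h3a
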